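/- arXiv:1504.07907 — 4 statements merged into one kernel-verified Lean document; each statement's English description precedes it below -/
import Mathlib

section
/- Let F be a symmetric fourth-order tensor on ℝⁿ with multilinear form F⁴(x,y,z,t) = Σ_{i,j,k,l=1}^n F_{ijkl} x_i y_j z_k t_l and score function S⁴(x) = F⁴(x,x,x,x). Then S⁴ : ℝⁿ → ℝ is convex if and only if F⁴(x,x,y,y) ≥ 0 for all x,y ∈ ℝⁿ. -/
/-- A fourth-order tensor is symmetric if its entries are invariant under any
permutation of the indices. -/
def Sym4 {n : ℕ} (F : Fin n → Fin n → Fin n → Fin n → ℝ) : Prop :=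
  ∀ (σ : Equiv.Perm (Fin 4)) (v : Fin 4 → Fin n),
    F (v (σ 0)) (v (σ 1)) (v (σ 2)) (v (σ 3)) = F (v 0) (v 1) (v 2) (v 3)

/-- The multilinear form associated to a fourth-order tensor. -/
def mform4 {n : ℕ} (F : Fin n → Fin n → Fin n → Fin n → ℝ)
    (x y z t : Fin n → ℝ) : ℝ :=
  ∑ i, ∑ j, ∑ k, ∑ l, F i j k l * x i * y j * z k * t l

section Aux

variable {n : ℕ} {F : Fin n → Fin n → Fin n → Fin n → ℝ}

lemma madd1 (F : Fin n → Fin n → Fin n → Fin n → ℝ) (a b y z t : Fin n → ℝ) :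
    mform4 F (a + b) y z t = mform4 F a y z t + mform4 F b y z t := by
  unfold mform4
  simp only [Pi.add_apply, ← Finset.sum_add_distrib]
  refine Finset.sum_congr rfl fun i _ => Finset.sum_congr rfl fun j _ =>
    Finset.sum_congr rfl fun k _ => Finset.sum_congr rfl fun l _ => by ring

lemma madd2 (F : Fin n → Fin n → Fin n → Fin n → ℝ) (x a b z t : Fin n → ℝ) :
    mform4 F x (a + b) z t = mform4 F x a z t + mform4 F x b z t := by
  unfold mform4
  simp only [Pi.add_apply, ← Finset.sum_add_distrib]
  refine Finset.sum_congr rfl fun i _ => Finset.sum_congr rfl fun j _ =>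
    Finset.sum_congr rfl fun k _ => Finset.sum_congr rfl fun l _ => by ring

lemma madd3 (F : Fin n → Fin n → Fin n → Fin n → ℝ) (x y a b t : Fin n → ℝ) :
    mform4 F x y (a + b) t = mform4 F x y a t + mform4 F x y b t := by
  unfold mform4
  simp only [Pi.add_apply, ← Finset.sum_add_distrib]
  refine Finset.sum_congr rfl fun i _ => Finset.sum_congr rfl fun j _ =>
    Finset.sum_congr rfl fun k _ => Finset.sum_congr rfl fun l _ => by ring

lemma madd4 (F : Fin n → Fin n → Fin n → Fin n → ℝ) (x y z a b : Fin n → ℝ) :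
    mform4 F x y z (a + b) = mform4 F x y z a + mform4 F x y z b := by
  unfold mform4
  simp only [Pi.add_apply, ← Finset.sum_add_distrib]
  refine Finset.sum_congr rfl fun i _ => Finset.sum_congr rfl fun j _ =>
    Finset.sum_congr rfl fun k _ => Finset.sum_congr rfl fun l _ => by ring

lemma msmul1 (F : Fin n → Fin n → Fin n → Fin n → ℝ) (c : ℝ) (a y z t : Fin n → ℝ) :
    mform4 F (c • a) y z t = c * mform4 F a y z t := by
  unfold mform4
  simp only [Pi.smul_apply, smul_eq_mul, Finset.mul_sum]
  refine Finset.sum_congr rfl fun i _ => Finset.sum_congr rfl fun j _ =>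
    Finset.sum_congr rfl fun k _ => Finset.sum_congr rfl fun l _ => by ring

lemma msmul2 (F : Fin n → Fin n → Fin n → Fin n → ℝ) (c : ℝ) (x a z t : Fin n → ℝ) :
    mform4 F x (c • a) z t = c * mform4 F x a z t := by
  unfold mform4
  simp only [Pi.smul_apply, smul_eq_mul, Finset.mul_sum]
  refine Finset.sum_congr rfl fun i _ => Finset.sum_congr rfl fun j _ =>
    Finset.sum_congr rfl fun k _ => Finset.sum_congr rfl fun l _ => by ring

lemma msmul3 (F : Fin n → Fin n → Fin n → Fin n → ℝ) (c : ℝ) (x y a t : Fin n → ℝ) :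
    mform4 F x y (c • a) t = c * mform4 F x y a t := by
  unfold mform4
  simp only [Pi.smul_apply, smul_eq_mul, Finset.mul_sum]
  refine Finset.sum_congr rfl fun i _ => Finset.sum_congr rfl fun j _ =>
    Finset.sum_congr rfl fun k _ => Finset.sum_congr rfl fun l _ => by ring

lemma msmul4 (F : Fin n → Fin n → Fin n → Fin n → ℝ) (c : ℝ) (x y z a : Fin n → ℝ) :
    mform4 F x y z (c • a) = c * mform4 F x y z a := by
  unfold mform4
  simp only [Pi.smul_apply, smul_eq_mul, Finset.mul_sum]
  refine Finset.sum_congr rfl fun i _ => Finset.sum_congr rfl fun j _ =>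
    Finset.sum_congr rfl fun k _ => Finset.sum_congr rfl fun l _ => by ring

lemma Fsw12 (hF : Sym4 F) (i j k l : Fin n) : F i j k l = F j i k l := by
  have := hF (Equiv.swap 0 1) ![j, i, k, l]
  simpa [Equiv.swap_apply_def] using this

lemma Fsw23 (hF : Sym4 F) (i j k l : Fin n) : F i j k l = F i k j l := by
  have := hF (Equiv.swap 1 2) ![i, k, j, l]
  simpa [Equiv.swap_apply_def] using this

lemma Fsw34 (hF : Sym4 F) (i j k l : Fin n) : F i j k l = F i j l k := by
  have := hF (Equiv.swap 2 3) ![i, j, l, k]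
  simpa [Equiv.swap_apply_def] using this

lemma msw12 (hF : Sym4 F) (a b z t : Fin n → ℝ) :
    mform4 F a b z t = mform4 F b a z t := by
  unfold mform4
  rw [Finset.sum_comm]
  refine Finset.sum_congr rfl fun i _ => Finset.sum_congr rfl fun j _ =>
    Finset.sum_congr rfl fun k _ => Finset.sum_congr rfl fun l _ => ?_
  rw [Fsw12 hF]; ring

lemma msw23 (hF : Sym4 F) (x a b t : Fin n → ℝ) :
    mform4 F x a b t = mform4 F x b a t := by
  unfold mform4
  refine Finset.sum_congr rfl fun i _ => ?_
  rw [Finset.sum_comm]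
  refine Finset.sum_congr rfl fun j _ =>
    Finset.sum_congr rfl fun k _ => Finset.sum_congr rfl fun l _ => ?_
  rw [Fsw23 hF]; ring

lemma msw34 (hF : Sym4 F) (x y a b : Fin n → ℝ) :
    mform4 F x y a b = mform4 F x y b a := by
  unfold mform4
  refine Finset.sum_congr rfl fun i _ => Finset.sum_congr rfl fun j _ => ?_
  rw [Finset.sum_comm]
  refine Finset.sum_congr rfl fun k _ => Finset.sum_congr rfl fun l _ => ?_
  rw [Fsw34 hF]; ring

lemma expandt (hF : Sym4 F) (x v : Fin n → ℝ) (t : ℝ) :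
    mform4 F (x + t • v) (x + t • v) (x + t • v) (x + t • v) =
      mform4 F x x x x + 4 * t * mform4 F x x x v + 6 * t ^ 2 * mform4 F x x v v
        + 4 * t ^ 3 * mform4 F x v v v + t ^ 4 * mform4 F v v v v := by
  simp only [madd1, madd2, madd3, madd4, msmul1, msmul2, msmul3, msmul4]
  have h1 : mform4 F v x x x = mform4 F x x x v := by
    rw [msw12 hF, msw23 hF, msw34 hF]
  have h2 : mform4 F x v x x = mform4 F x x x v := by rw [msw23 hF, msw34 hF]
  have h3 : mform4 F x x v x = mform4 F x x x v := by rw [msw34 hF]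
  have h4 : mform4 F v v x x = mform4 F x x v v := by
    rw [msw23 hF, msw12 hF, msw34 hF, msw23 hF]
  have h5 : mform4 F v x v x = mform4 F x x v v := by rw [msw12 hF, msw34 hF, msw23 hF]
  have h6 : mform4 F v x x v = mform4 F x x v v := by rw [msw12 hF, msw23 hF]
  have h7 : mform4 F x v v x = mform4 F x x v v := by rw [msw34 hF, msw23 hF]
  have h8 : mform4 F x v x v = mform4 F x x v v := by rw [msw23 hF]
  have h9 : mform4 F v v v x = mform4 F x v v v := by
    rw [msw34 hF, msw23 hF, msw12 hF]
  have h10 : mform4 F v v x v = mform4 F x v v v := by rw [msw23 hF, msw12 hF]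
  have h11 : mform4 F v x v v = mform4 F x v v v := by rw [msw12 hF]
  linear_combination t * h1 + t * h2 + t * h3 + t ^ 2 * (h4 + h5 + h6 + h7 + h8)
    + t ^ 3 * (h9 + h10 + h11)

lemma expand2 (hF : Sym4 F) (x v : Fin n → ℝ) (t : ℝ) :
    mform4 F (x + t • v) (x + t • v) v v =
      mform4 F x x v v + 2 * t * mform4 F x v v v + t ^ 2 * mform4 F v v v v := by
  simp only [madd1, madd2, msmul1, msmul2]
  have h : mform4 F v x v v = mform4 F x v v v := by rw [msw12 hF]
  linear_combination t * h

lemma quartic_deriv (A B C D E : ℝ) (t : ℝ) :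
    HasDerivAt (fun s : ℝ => A + B * s + C * s ^ 2 + D * s ^ 3 + E * s ^ 4)
      (B + 2 * C * t + 3 * D * t ^ 2 + 4 * E * t ^ 3) t := by
  have h0 := hasDerivAt_const t A
  have h1 := (hasDerivAt_pow 1 t).const_mul B
  have h2 := (hasDerivAt_pow 2 t).const_mul C
  have h3 := (hasDerivAt_pow 3 t).const_mul D
  have h4 := (hasDerivAt_pow 4 t).const_mul E
  have h := (((h0.add h1).add h2).add h3).add h4
  refine (h.congr_deriv ?_).congr_of_eventuallyEq (Filter.Eventually.of_forall fun s => ?_)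
  · push_cast; ring
  · simp only [Pi.add_apply]; ring

lemma cubic_deriv (B C D E : ℝ) (t : ℝ) :
    HasDerivAt (fun s : ℝ => B + 2 * C * s + 3 * D * s ^ 2 + 4 * E * s ^ 3)
      (2 * C + 6 * D * t + 12 * E * t ^ 2) t := by
  have h0 := hasDerivAt_const t B
  have h1 := (hasDerivAt_pow 1 t).const_mul (2 * C)
  have h2 := (hasDerivAt_pow 2 t).const_mul (3 * D)
  have h3 := (hasDerivAt_pow 3 t).const_mul (4 * E)
  have h := ((h0.add h1).add h2).add h3
  refine (h.congr_deriv ?_).congr_of_eventuallyEq (Filter.Eventually.of_forall fun s => ?_)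
  · push_cast; ring
  · simp only [Pi.add_apply]; ring

lemma quartic_convex (A B C D E : ℝ)
    (h : ∀ t : ℝ, 0 ≤ 2 * C + 6 * D * t + 12 * E * t ^ 2) :
    ConvexOn ℝ Set.univ (fun s : ℝ => A + B * s + C * s ^ 2 + D * s ^ 3 + E * s ^ 4) := by
  have hd : deriv (fun s : ℝ => A + B * s + C * s ^ 2 + D * s ^ 3 + E * s ^ 4)
      = fun s : ℝ => B + 2 * C * s + 3 * D * s ^ 2 + 4 * E * s ^ 3 :=
    funext fun t => (quartic_deriv A B C D E t).deriv
  apply convexOn_of_deriv2_nonneg convex_univ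
  · exact fun t _ => (quartic_deriv A B C D E t).continuousAt.continuousWithinAt
  · exact fun t _ => (quartic_deriv A B C D E t).differentiableAt.differentiableWithinAt
  · rw [hd]
    exact fun t _ => (cubic_deriv B C D E t).differentiableAt.differentiableWithinAt
  · intro t _
    have heq : deriv^[2] (fun s : ℝ => A + B * s + C * s ^ 2 + D * s ^ 3 + E * s ^ 4) t
        = 2 * C + 6 * D * t + 12 * E * t ^ 2 := by
      show deriv (deriv _) t = _
      rw [hd, (cubic_deriv B C D E t).deriv]
    rw [heq]; exact h t

end Aux

/-- The score function `S⁴(x) = F⁴(x,x,x,x)` of a symmetric fourth-order tensor is convex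
if and only if `F⁴(x,x,y,y) ≥ 0` for all `x, y`. -/
theorem stmt_2 {n : ℕ} (F : Fin n → Fin n → Fin n → Fin n → ℝ) (hF : Sym4 F) :
    ConvexOn ℝ Set.univ (fun x : Fin n → ℝ => mform4 F x x x x) ↔
      ∀ x y : Fin n → ℝ, 0 ≤ mform4 F x x y y := by
  constructor
  · intro hconv x y
    by_contra hC
    push_neg at hC
    have key : ∀ h : ℝ,
        0 ≤ 6 * h ^ 2 * mform4 F x x y y + h ^ 4 * mform4 F y y y y := by
      intro h
      have h1 := expandt hF x y h
      have h2 := expandt hF x y (-h)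
      have hmid : (1 / 2 : ℝ) • (x + h • y) + (1 / 2 : ℝ) • (x + (-h) • y) = x := by
        funext i
        simp only [Pi.add_apply, Pi.smul_apply, smul_eq_mul]
        ring
      have hc := hconv.2 (Set.mem_univ (x + h • y)) (Set.mem_univ (x + (-h) • y))
        (by norm_num : (0:ℝ) ≤ 1/2) (by norm_num : (0:ℝ) ≤ 1/2) (by norm_num)
      rw [hmid] at hc
      simp only [smul_eq_mul] at hc
      rw [h1, h2] at hc
      nlinarith [hc]
    set Cm := mform4 F x x y y with hCm
    set Em := mform4 F y y y y with hEm
    have hEm1 : (0:ℝ) < |Em| + 1 := by positivity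
    set ε := -Cm / (|Em| + 1) with hε
    have hεpos : 0 < ε := by
      apply div_pos _ hEm1; linarith
    have hsq : Real.sqrt ε ^ 2 = ε := Real.sq_sqrt hεpos.le
    have k := key (Real.sqrt ε)
    have h4 : Real.sqrt ε ^ 4 = ε ^ 2 := by
      rw [show Real.sqrt ε ^ 4 = (Real.sqrt ε ^ 2) ^ 2 by ring, hsq]
    rw [hsq, h4] at k
    have hEb : Em ≤ |Em| := le_abs_self Em
    have hmul : ε * (|Em| + 1) = -Cm := by
      rw [hε]; field_simp
    nlinarith [k, hεpos, hEb, hmul, hC, mul_pos hεpos hεpos,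
      mul_le_mul_of_nonneg_left hEb (mul_pos hεpos hεpos).le]
  · intro hpos
    refine ⟨convex_univ, ?_⟩
    intro a _ b _ p q hp hq hpq
    set v := b - a with hv
    set A := mform4 F a a a a with hA
    set B := 4 * mform4 F a a a v with hB
    set C := 6 * mform4 F a a v v with hCdef
    set D := 4 * mform4 F a v v v with hD
    set E := mform4 F v v v v with hE
    have hS : ∀ t : ℝ, mform4 F (a + t • v) (a + t • v) (a + t • v) (a + t • v)
        = A + B * t + C * t ^ 2 + D * t ^ 3 + E * t ^ 4 := by
      intro t; rw [expandt hF a v t, hA, hB, hCdef, hD, hE]; ring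
    have hg : ConvexOn ℝ Set.univ
        (fun s : ℝ => A + B * s + C * s ^ 2 + D * s ^ 3 + E * s ^ 4) := by
      apply quartic_convex
      intro t
      have h := hpos (a + t • v) v
      rw [expand2 hF a v t] at h
      rw [hCdef, hD, hE]
      nlinarith [h]
    have habq : p • a + q • b = a + q • v := by
      have hp' : p = 1 - q := by linarith
      funext i
      simp only [Pi.add_apply, Pi.smul_apply, smul_eq_mul, hv, Pi.sub_apply, hp']
      ring
    have hb1 : a + (1 : ℝ) • v = b := by
      rw [one_smul, hv]; abel
    have hkey := hg.2 (Set.mem_univ (0 : ℝ)) (Set.mem_univ (1 : ℝ)) hp hq hpq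
    simp only [smul_eq_mul, mul_zero, mul_one, zero_add] at hkey
    have g1 : A + B * 1 + C * 1 ^ 2 + D * 1 ^ 3 + E * 1 ^ 4 = mform4 F b b b b := by
      rw [← hS 1, hb1]
    have g0 : A + B * 0 + C * 0 ^ 2 + D * 0 ^ 3 + E * 0 ^ 4 = mform4 F a a a a := by
      rw [hA]; ring
    simp only [smul_eq_mul]
    calc mform4 F (p • a + q • b) (p • a + q • b) (p • a + q • b) (p • a + q • b)
        = A + B * q + C * q ^ 2 + D * q ^ 3 + E * q ^ 4 := by rw [habq, hS q]
      _ ≤ p * (A + B * 0 + C * 0 ^ 2 + D * 0 ^ 3 + E * 0 ^ 4)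
            + q * (A + B * 1 + C * 1 ^ 2 + D * 1 ^ 3 + E * 1 ^ 4) := by
          convert hkey using 2
          · rfl
          · ring
          · ring
      _ = p * mform4 F a a a a + q * mform4 F b b b b := by rw [g0, g1]
end

section
/- Let F be a symmetric fourth-order tensor on ℝⁿ with multilinear form F⁴ and convex score function S⁴(x) = F⁴(x,x,x,x). Then for all x,y ∈ ℝⁿ: F⁴(x,x,y,y) ≤ max{ F⁴(x,x,x,x), F⁴(y,y,y,y) }. -/
section Aux

variable {n : ℕ} (F : Fin n → Fin n → Fin n → Fin n → ℝ)

private lemma h12 (hF : Sym4 F) (i j k l : Fin n) : F j i k l = F i j k l := by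
  simpa [Equiv.swap_apply_def] using hF (Equiv.swap 0 1) ![i,j,k,l]

private lemma h23 (hF : Sym4 F) (i j k l : Fin n) : F i k j l = F i j k l := by
  simpa [Equiv.swap_apply_def] using hF (Equiv.swap 1 2) ![i,j,k,l]

private lemma h34 (hF : Sym4 F) (i j k l : Fin n) : F i j l k = F i j k l := by
  simpa [Equiv.swap_apply_def] using hF (Equiv.swap 2 3) ![i,j,k,l]

private lemma m_add1 (x x' y z t : Fin n → ℝ) :
    mform4 F (x + x') y z t = mform4 F x y z t + mform4 F x' y z t := by
  simp only [mform4, Pi.add_apply, ← Finset.sum_add_distrib]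
  exact Finset.sum_congr rfl fun i _ => Finset.sum_congr rfl fun j _ =>
    Finset.sum_congr rfl fun k _ => Finset.sum_congr rfl fun l _ => by ring

private lemma m_add2 (x y y' z t : Fin n → ℝ) :
    mform4 F x (y + y') z t = mform4 F x y z t + mform4 F x y' z t := by
  simp only [mform4, Pi.add_apply, ← Finset.sum_add_distrib]
  exact Finset.sum_congr rfl fun i _ => Finset.sum_congr rfl fun j _ =>
    Finset.sum_congr rfl fun k _ => Finset.sum_congr rfl fun l _ => by ring

private lemma m_add3 (x y z z' t : Fin n → ℝ) :
    mform4 F x y (z + z') t = mform4 F x y z t + mform4 F x y z' t := by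
  simp only [mform4, Pi.add_apply, ← Finset.sum_add_distrib]
  exact Finset.sum_congr rfl fun i _ => Finset.sum_congr rfl fun j _ =>
    Finset.sum_congr rfl fun k _ => Finset.sum_congr rfl fun l _ => by ring

private lemma m_add4 (x y z t t' : Fin n → ℝ) :
    mform4 F x y z (t + t') = mform4 F x y z t + mform4 F x y z t' := by
  simp only [mform4, Pi.add_apply, ← Finset.sum_add_distrib]
  exact Finset.sum_congr rfl fun i _ => Finset.sum_congr rfl fun j _ =>
    Finset.sum_congr rfl fun k _ => Finset.sum_congr rfl fun l _ => by ring

private lemma m_smul1 (c : ℝ) (x y z t : Fin n → ℝ) :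
    mform4 F (c • x) y z t = c * mform4 F x y z t := by
  simp only [mform4, Pi.smul_apply, smul_eq_mul, Finset.mul_sum]
  exact Finset.sum_congr rfl fun i _ => Finset.sum_congr rfl fun j _ =>
    Finset.sum_congr rfl fun k _ => Finset.sum_congr rfl fun l _ => by ring

private lemma m_smul2 (c : ℝ) (x y z t : Fin n → ℝ) :
    mform4 F x (c • y) z t = c * mform4 F x y z t := by
  simp only [mform4, Pi.smul_apply, smul_eq_mul, Finset.mul_sum]
  exact Finset.sum_congr rfl fun i _ => Finset.sum_congr rfl fun j _ =>
    Finset.sum_congr rfl fun k _ => Finset.sum_congr rfl fun l _ => by ring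

private lemma m_smul3 (c : ℝ) (x y z t : Fin n → ℝ) :
    mform4 F x y (c • z) t = c * mform4 F x y z t := by
  simp only [mform4, Pi.smul_apply, smul_eq_mul, Finset.mul_sum]
  exact Finset.sum_congr rfl fun i _ => Finset.sum_congr rfl fun j _ =>
    Finset.sum_congr rfl fun k _ => Finset.sum_congr rfl fun l _ => by ring

private lemma m_smul4 (c : ℝ) (x y z t : Fin n → ℝ) :
    mform4 F x y z (c • t) = c * mform4 F x y z t := by
  simp only [mform4, Pi.smul_apply, smul_eq_mul, Finset.mul_sum]
  exact Finset.sum_congr rfl fun i _ => Finset.sum_congr rfl fun j _ =>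
    Finset.sum_congr rfl fun k _ => Finset.sum_congr rfl fun l _ => by ring

private lemma sw12 (hF : Sym4 F) (x y z t : Fin n → ℝ) :
    mform4 F y x z t = mform4 F x y z t := by
  simp only [mform4]
  rw [Finset.sum_comm]
  exact Finset.sum_congr rfl fun i _ => Finset.sum_congr rfl fun j _ =>
    Finset.sum_congr rfl fun k _ => Finset.sum_congr rfl fun l _ => by
      rw [h12 F hF]; ring

private lemma sw23 (hF : Sym4 F) (x y z t : Fin n → ℝ) :
    mform4 F x z y t = mform4 F x y z t := by
  simp only [mform4]
  refine Finset.sum_congr rfl fun i _ => ?_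
  rw [Finset.sum_comm]
  exact Finset.sum_congr rfl fun j _ =>
    Finset.sum_congr rfl fun k _ => Finset.sum_congr rfl fun l _ => by
      rw [h23 F hF]; ring

private lemma sw34 (hF : Sym4 F) (x y z t : Fin n → ℝ) :
    mform4 F x y t z = mform4 F x y z t := by
  simp only [mform4]
  refine Finset.sum_congr rfl fun i _ => Finset.sum_congr rfl fun j _ => ?_
  rw [Finset.sum_comm]
  exact Finset.sum_congr rfl fun k _ => Finset.sum_congr rfl fun l _ => by
      rw [h34 F hF]; ring

private lemma expand4 (hF : Sym4 F) (u w : Fin n → ℝ) (c : ℝ) :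
    mform4 F (u + c • w) (u + c • w) (u + c • w) (u + c • w)
      = mform4 F u u u u + 4*c*mform4 F u u u w + 6*c^2*mform4 F u u w w
        + 4*c^3*mform4 F u w w w + c^4*mform4 F w w w w := by
  have pa : mform4 F u u w u = mform4 F u u u w := sw34 F hF u u u w
  have pb : mform4 F u w u u = mform4 F u u u w := by rw [sw23 F hF u u w u, pa]
  have pc : mform4 F w u u u = mform4 F u u u w := by rw [sw12 F hF u w u u, pb]
  have pd : mform4 F u w u w = mform4 F u u w w := sw23 F hF u u w w
  have pe : mform4 F u w w u = mform4 F u u w w := by rw [sw34 F hF u w u w, pd]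
  have pf : mform4 F w u u w = mform4 F u u w w := by rw [sw12 F hF u w u w, pd]
  have pg : mform4 F w u w u = mform4 F u u w w := by rw [sw12 F hF u w w u, pe]
  have ph : mform4 F w w u u = mform4 F u u w w := by rw [sw23 F hF w u w u, pg]
  have pi : mform4 F w u w w = mform4 F u w w w := sw12 F hF u w w w
  have pj : mform4 F w w u w = mform4 F u w w w := by rw [sw23 F hF w u w w, pi]
  have pk : mform4 F w w w u = mform4 F u w w w := by rw [sw34 F hF w w u w, pj]
  simp only [m_add1 F, m_add2 F, m_add3 F, m_add4 F,
    m_smul1 F, m_smul2 F, m_smul3 F, m_smul4 F,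
    pa, pb, pc, pd, pe, pf, pg, ph, pi, pj, pk]
  ring

private lemma score_nonneg (hF : Sym4 F)
    (hconv : ConvexOn ℝ Set.univ (fun x : Fin n → ℝ => mform4 F x x x x))
    (w : Fin n → ℝ) : 0 ≤ mform4 F w w w w := by
  have h := hconv.2 (Set.mem_univ w) (Set.mem_univ (-w))
    (by norm_num : (0:ℝ) ≤ 1/2) (by norm_num : (0:ℝ) ≤ 1/2) (by norm_num)
  have hz : (1/2 : ℝ) • w + (1/2 : ℝ) • (-w) = 0 := by
    funext i; simp
  rw [hz] at h
  have h0 : mform4 F (0 : Fin n → ℝ) 0 0 0 = 0 := by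
    simp [mform4]
  have hneg : mform4 F (-w) (-w) (-w) (-w) = mform4 F w w w w := by
    rw [show (-w : Fin n → ℝ) = (-1 : ℝ) • w by simp,
      m_smul1, m_smul2, m_smul3, m_smul4]
    ring
  simp only [h0, hneg, smul_eq_mul] at h
  linarith

private lemma key_nonneg (hF : Sym4 F)
    (hconv : ConvexOn ℝ Set.univ (fun x : Fin n → ℝ => mform4 F x x x x))
    (u w : Fin n → ℝ) : 0 ≤ mform4 F u u w w := by
  have hSw : 0 ≤ mform4 F w w w w := score_nonneg F hF hconv w
  -- for every t ≠ 0: 0 ≤ 6 * mform4 F u u w w + t^2 * S w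
  have hstep : ∀ t : ℝ, t ≠ 0 → 0 ≤ 6 * mform4 F u u w w + t^2 * mform4 F w w w w := by
    intro t ht
    have h := hconv.2 (Set.mem_univ (u + t • w)) (Set.mem_univ (u + (-t) • w))
      (by norm_num : (0:ℝ) ≤ 1/2) (by norm_num : (0:ℝ) ≤ 1/2) (by norm_num)
    have hz : (1/2 : ℝ) • (u + t • w) + (1/2 : ℝ) • (u + (-t) • w) = u := by
      funext i; simp [Pi.smul_apply, Pi.add_apply]; ring
    rw [hz] at h
    simp only [expand4 F hF u w t, expand4 F hF u w (-t), smul_eq_mul] at h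
    have ht2 : 0 < t^2 := by positivity
    nlinarith [h, ht2, mul_pos ht2 ht2]
  by_contra hneg
  push_neg at hneg
  rcases eq_or_lt_of_le hSw with hz | hpos
  · have := hstep 1 one_ne_zero
    nlinarith
  · set B := mform4 F u u w w with hB
    set c := mform4 F w w w w with hc
    have harg : 0 ≤ -3 * B / c := div_nonneg (by linarith) hpos.le
    have ht : Real.sqrt (-3 * B / c) ≠ 0 := by
      refine ne_of_gt (Real.sqrt_pos.mpr ?_)
      have : 0 < -3 * B := by linarith
      positivity
    have h := hstep _ ht
    rw [Real.sq_sqrt harg] at h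
    rw [div_mul_eq_mul_div, mul_div_assoc, div_self (ne_of_gt hpos)] at h
    linarith

end Aux

set_option maxHeartbeats 1000000 in
/-- If the score function of a symmetric fourth-order tensor is convex, then
`F⁴(x,x,y,y) ≤ max (F⁴(x,x,x,x)) (F⁴(y,y,y,y))`. -/
theorem stmt_3 {n : ℕ} (F : Fin n → Fin n → Fin n → Fin n → ℝ) (hF : Sym4 F)
    (hconv : ConvexOn ℝ Set.univ (fun x : Fin n → ℝ => mform4 F x x x x)) :
    ∀ x y : Fin n → ℝ,
      mform4 F x x y y ≤ max (mform4 F x x x x) (mform4 F y y y y) := by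
  intro x y
  set α := mform4 F x x x x with hα
  set β := mform4 F x x x y with hβ
  set γ := mform4 F x x y y with hγ
  set δ := mform4 F x y y y with hδ
  set ε := mform4 F y y y y with hε
  -- sorting lemmas with u := x, w := y
  have pa : mform4 F x x y x = β := sw34 F hF x x x y
  have pb : mform4 F x y x x = β := by rw [sw23 F hF x x y x, pa]
  have pc : mform4 F y x x x = β := by rw [sw12 F hF x y x x, pb]
  have pd : mform4 F x y x y = γ := sw23 F hF x x y y
  have pe : mform4 F x y y x = γ := by rw [sw34 F hF x y x y, pd]
  have pf : mform4 F y x x y = γ := by rw [sw12 F hF x y x y, pd]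
  have pg : mform4 F y x y x = γ := by rw [sw12 F hF x y y x, pe]
  have ph : mform4 F y y x x = γ := by rw [sw23 F hF y x y x, pg]
  have pi : mform4 F y x y y = δ := sw12 F hF x y y y
  have pj : mform4 F y y x y = δ := by rw [sw23 F hF y x y y, pi]
  -- basic nonnegativity
  have hα0 : 0 ≤ α := key_nonneg F hF hconv x x
  have hε0 : 0 ≤ ε := key_nonneg F hF hconv y y
  -- discriminant inequalities at u = x + e • y
  have disc : ∀ e : ℝ, e = 1 ∨ e = -1 →
      (β + 2*e*γ + e^2*δ)^2 ≤ (α + 2*e*β + e^2*γ) * (γ + 2*e*δ + e^2*ε) := by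
    intro e _
    set u := x + e • y with hu
    have hP : mform4 F u u x x = α + 2*e*β + e^2*γ := by
      rw [hu]
      simp only [m_add1 F, m_add2 F, m_smul1 F, m_smul2 F, pb, pc, ph]
      ring
    have hQ : mform4 F u u x y = β + 2*e*γ + e^2*δ := by
      rw [hu]
      simp only [m_add1 F, m_add2 F, m_smul1 F, m_smul2 F, pd, pf, pg, pj]
      ring
    have hR : mform4 F u u y y = γ + 2*e*δ + e^2*ε := by
      rw [hu]
      simp only [m_add1 F, m_add2 F, m_smul1 F, m_smul2 F, pd, pg, pi, ph]
      ring
    have hquad : ∀ s : ℝ, 0 ≤ (α + 2*e*β + e^2*γ) * (s * s)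
        + (2*(β + 2*e*γ + e^2*δ)) * s + (γ + 2*e*δ + e^2*ε) := by
      intro s
      have h0 := key_nonneg F hF hconv u (s • x + y)
      have hexp : mform4 F u u (s • x + y) (s • x + y)
          = mform4 F u u x x * s^2 + (mform4 F u u x y + mform4 F u u y x) * s
            + mform4 F u u y y := by
        simp only [m_add3 F, m_add4 F, m_smul3 F, m_smul4 F]
        ring
      have hyx : mform4 F u u y x = mform4 F u u x y := sw34 F hF u u x y
      rw [hexp, hyx, hP, hQ, hR] at h0
      nlinarith [h0]
    have hd := discrim_le_zero hquad
    rw [discrim] at hd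
    nlinarith [hd]
  have h1 := disc 1 (Or.inl rfl)
  have h2 := disc (-1) (Or.inr rfl)
  norm_num at h1 h2
  -- final contradiction
  by_contra hcon
  push_neg at hcon
  rw [max_lt_iff] at hcon
  obtain ⟨hcα, hcε⟩ := hcon
  nlinarith [h1, h2, sq_nonneg (β - δ), sq_nonneg (β + δ),
    mul_pos (by linarith : (0:ℝ) < γ - α) (by linarith : (0:ℝ) < γ + ε),
    mul_pos (by linarith : (0:ℝ) < γ - ε) (by linarith : (0:ℝ) < γ + γ)]
end

section
/- Let F be a symmetric fourth-order tensor on ℝⁿ with multilinear form F⁴ and convex score function S⁴(x) = F⁴(x,x,x,x). Then for all x,y,z,t ∈ ℝⁿ: F⁴(x,y,z,t) ≤ max{ F⁴(u,u,u,u) : u ∈ {x,y,z,t} }. -/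
namespace Stmt4Aux

variable {n : ℕ} {F : Fin n → Fin n → Fin n → Fin n → ℝ}

lemma mswap12 (hF : Sym4 F) (x y z t : Fin n → ℝ) :
    mform4 F y x z t = mform4 F x y z t := by
  unfold mform4
  rw [Finset.sum_comm]
  refine Finset.sum_congr rfl fun i _ => Finset.sum_congr rfl fun j _ =>
    Finset.sum_congr rfl fun k _ => Finset.sum_congr rfl fun l _ => ?_
  have h : F j i k l = F i j k l := by simpa [Equiv.swap_apply_def] using hF (Equiv.swap 0 1) ![i, j, k, l]
  rw [h]; ring

lemma mswap23 (hF : Sym4 F) (x y z t : Fin n → ℝ) :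
    mform4 F x z y t = mform4 F x y z t := by
  unfold mform4
  refine Finset.sum_congr rfl fun i _ => ?_
  rw [Finset.sum_comm]
  refine Finset.sum_congr rfl fun j _ =>
    Finset.sum_congr rfl fun k _ => Finset.sum_congr rfl fun l _ => ?_
  have h : F i k j l = F i j k l := by simpa [Equiv.swap_apply_def] using hF (Equiv.swap 1 2) ![i, j, k, l]
  rw [h]; ring

lemma mswap34 (hF : Sym4 F) (x y z t : Fin n → ℝ) :
    mform4 F x y t z = mform4 F x y z t := by
  unfold mform4
  refine Finset.sum_congr rfl fun i _ => Finset.sum_congr rfl fun j _ => ?_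
  rw [Finset.sum_comm]
  refine Finset.sum_congr rfl fun k _ => Finset.sum_congr rfl fun l _ => ?_
  have h : F i j l k = F i j k l := by simpa [Equiv.swap_apply_def] using hF (Equiv.swap 2 3) ![i, j, k, l]
  rw [h]; ring

lemma mexp2 (x y z t : Fin n → ℝ) :
    mform4 F (x + y) (x + y) z t =
      mform4 F x x z t + mform4 F x y z t + mform4 F y x z t + mform4 F y y z t := by
  simp only [mform4, ← Finset.sum_add_distrib, Pi.add_apply]
  refine Finset.sum_congr rfl fun i _ => Finset.sum_congr rfl fun j _ =>
    Finset.sum_congr rfl fun k _ => Finset.sum_congr rfl fun l _ => ?_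
  ring

lemma mexp2' (x y z t : Fin n → ℝ) :
    mform4 F (x - y) (x - y) z t =
      mform4 F x x z t - mform4 F x y z t - mform4 F y x z t + mform4 F y y z t := by
  simp only [mform4, ← Finset.sum_add_distrib, ← Finset.sum_sub_distrib, Pi.sub_apply]
  refine Finset.sum_congr rfl fun i _ => Finset.sum_congr rfl fun j _ =>
    Finset.sum_congr rfl fun k _ => Finset.sum_congr rfl fun l _ => ?_
  ring

lemma mexp34 (p u v : Fin n → ℝ) (c : ℝ) :
    mform4 F p p (u + c • v) (u + c • v) =
      mform4 F p p u u + c * mform4 F p p u v + c * mform4 F p p v u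
        + c ^ 2 * mform4 F p p v v := by
  simp only [mform4, Finset.mul_sum, ← Finset.sum_add_distrib, Pi.add_apply,
    Pi.smul_apply, smul_eq_mul]
  refine Finset.sum_congr rfl fun i _ => Finset.sum_congr rfl fun j _ =>
    Finset.sum_congr rfl fun k _ => Finset.sum_congr rfl fun l _ => ?_
  ring

lemma msmul4 (x : Fin n → ℝ) (c : ℝ) :
    mform4 F (c • x) (c • x) (c • x) (c • x) = c ^ 4 * mform4 F x x x x := by
  simp only [mform4, Finset.mul_sum, Pi.smul_apply, smul_eq_mul]
  refine Finset.sum_congr rfl fun i _ => Finset.sum_congr rfl fun j _ =>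
    Finset.sum_congr rfl fun k _ => Finset.sum_congr rfl fun l _ => ?_
  ring

lemma msmul12 (x w w' : Fin n → ℝ) (c : ℝ) :
    mform4 F (c • x) (c • x) w w' = c ^ 2 * mform4 F x x w w' := by
  simp only [mform4, Finset.mul_sum, Pi.smul_apply, smul_eq_mul]
  refine Finset.sum_congr rfl fun i _ => Finset.sum_congr rfl fun j _ =>
    Finset.sum_congr rfl fun k _ => Finset.sum_congr rfl fun l _ => ?_
  ring

lemma mexp_pm (u w : Fin n → ℝ) :
    mform4 F (u + w) (u + w) (u + w) (u + w) + mform4 F (u - w) (u - w) (u - w) (u - w) =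
      2 * mform4 F u u u u + 2 * mform4 F u u w w + 2 * mform4 F u w u w
        + 2 * mform4 F u w w u + 2 * mform4 F w u u w + 2 * mform4 F w u w u
        + 2 * mform4 F w w u u + 2 * mform4 F w w w w := by
  simp only [mform4, Finset.mul_sum, ← Finset.sum_add_distrib, Pi.add_apply, Pi.sub_apply]
  refine Finset.sum_congr rfl fun i _ => Finset.sum_congr rfl fun j _ =>
    Finset.sum_congr rfl fun k _ => Finset.sum_congr rfl fun l _ => ?_
  ring

/-- Collected version of `mexp_pm` using symmetry. -/
lemma mexp_pm' (hF : Sym4 F) (u w : Fin n → ℝ) :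
    mform4 F (u + w) (u + w) (u + w) (u + w) + mform4 F (u - w) (u - w) (u - w) (u - w) =
      2 * mform4 F u u u u + 12 * mform4 F u u w w + 2 * mform4 F w w w w := by
  have e1 : mform4 F u w u w = mform4 F u u w w := mswap23 hF u u w w
  have e2 : mform4 F u w w u = mform4 F u u w w := (mswap34 hF u w u w).trans e1
  have e3 : mform4 F w u u w = mform4 F u u w w := (mswap12 hF u w u w).trans e1
  have e4 : mform4 F w u w u = mform4 F u u w w := (mswap12 hF u w w u).trans e2
  have e5 : mform4 F w w u u = mform4 F u u w w := by
    rw [mswap23 hF w u w u, e4]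
  rw [mexp_pm u w, e1, e2, e3, e4, e5]; ring

/-- Key convexity consequence, scaled version. -/
lemma key (hF : Sym4 F)
    (hconv : ConvexOn ℝ Set.univ (fun x : Fin n → ℝ => mform4 F x x x x))
    (p w : Fin n → ℝ) (s : ℝ) :
    0 ≤ 6 * s ^ 2 * mform4 F p p w w + mform4 F w w w w := by
  have hc := hconv.2 (Set.mem_univ (s • p + w)) (Set.mem_univ (s • p - w))
    (by norm_num : (0:ℝ) ≤ 1/2) (by norm_num : (0:ℝ) ≤ 1/2) (by norm_num)
  have hmid : (1/2 : ℝ) • (s • p + w) + (1/2 : ℝ) • (s • p - w) = s • p := by module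
  rw [hmid] at hc
  simp only [smul_eq_mul] at hc
  rw [msmul4 p s] at hc
  have hpm := mexp_pm' hF (s • p) w
  rw [msmul4 p s, msmul12 p w w s] at hpm
  linarith

/-- Nonnegativity of the "Hessian" form. -/
lemma hess_nonneg (hF : Sym4 F)
    (hconv : ConvexOn ℝ Set.univ (fun x : Fin n → ℝ => mform4 F x x x x))
    (p w : Fin n → ℝ) : 0 ≤ mform4 F p p w w := by
  by_contra h
  push_neg at h
  set M := mform4 F p p w w with hM
  set W := mform4 F w w w w with hW
  have hW0 : 0 ≤ W := by simpa using key hF hconv p w 0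
  have h6M : (0:ℝ) < 6 * (-M) := by linarith
  have hs := key hF hconv p w (Real.sqrt ((W + 1) / (6 * (-M))))
  rw [Real.sq_sqrt (by positivity : (0:ℝ) ≤ (W + 1) / (6 * (-M)))] at hs
  have hprod : (W + 1) / (6 * (-M)) * (6 * (-M)) = W + 1 :=
    div_mul_cancel₀ _ (ne_of_gt h6M)
  nlinarith [hs, hprod]

/-- Cauchy–Schwarz for the positive semidefinite quadratic form `w ↦ M p p w w`. -/
lemma cs (hF : Sym4 F)
    (hconv : ConvexOn ℝ Set.univ (fun x : Fin n → ℝ => mform4 F x x x x))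
    (p u v : Fin n → ℝ) :
    (mform4 F p p u v) ^ 2 ≤ mform4 F p p u u * mform4 F p p v v := by
  have h : ∀ c : ℝ, 0 ≤ mform4 F p p v v * (c * c) + (2 * mform4 F p p u v) * c
      + mform4 F p p u u := by
    intro c
    have h0 := hess_nonneg hF hconv p (u + c • v)
    rw [mexp34 p u v c, mswap34 hF p p u v] at h0
    nlinarith [h0]
  have hd := discrim_le_zero h
  rw [discrim] at hd
  nlinarith [hd]

/-- AM bound from Cauchy–Schwarz. -/
lemma am_of_cs {x a b : ℝ} (h : x ^ 2 ≤ a * b) (ha : 0 ≤ a) (hb : 0 ≤ b) :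
    x ≤ (a + b) / 2 := by
  nlinarith [sq_nonneg (a - b), sq_nonneg x, sq_nonneg (a + b - 2 * x)]

/-- Stage A. -/
lemma stageA (hF : Sym4 F)
    (hconv : ConvexOn ℝ Set.univ (fun x : Fin n → ℝ => mform4 F x x x x))
    (x y z t : Fin n → ℝ) :
    4 * mform4 F x y z t ≤
      mform4 F x x z z + mform4 F y y z z + mform4 F x x t t + mform4 F y y t t := by
  set p := x + y with hp
  set q := x - y with hq
  have hyx : mform4 F y x z t = mform4 F x y z t := mswap12 hF x y z t
  have hpol : mform4 F p p z t - mform4 F q q z t = 4 * mform4 F x y z t := by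
    rw [hp, hq, mexp2 x y z t, mexp2' x y z t, hyx]; ring
  have h1 : mform4 F p p z t ≤ (mform4 F p p z z + mform4 F p p t t) / 2 :=
    am_of_cs (cs hF hconv p z t) (hess_nonneg hF hconv p z) (hess_nonneg hF hconv p t)
  have h2 : -(mform4 F q q z t) ≤ (mform4 F q q z z + mform4 F q q t t) / 2 :=
    am_of_cs (by nlinarith [cs hF hconv q z t]) (hess_nonneg hF hconv q z)
      (hess_nonneg hF hconv q t)
  have hzz : mform4 F p p z z + mform4 F q q z z
      = 2 * mform4 F x x z z + 2 * mform4 F y y z z := by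
    rw [hp, hq, mexp2 x y z z, mexp2' x y z z]; ring
  have htt : mform4 F p p t t + mform4 F q q t t
      = 2 * mform4 F x x t t + 2 * mform4 F y y t t := by
    rw [hp, hq, mexp2 x y t t, mexp2' x y t t]; ring
  linarith

/-- Stage B : `M a a b b ≤ (S a + S b)/2`. -/
lemma pairbound (hF : Sym4 F)
    (hconv : ConvexOn ℝ Set.univ (fun x : Fin n → ℝ => mform4 F x x x x))
    (a b : Fin n → ℝ) :
    mform4 F a a b b ≤ (mform4 F a a a a + mform4 F b b b b) / 2 := by
  have c1 : mform4 F a b a b = mform4 F a a b b := mswap23 hF a a b b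
  have c2 : mform4 F b a a b = mform4 F a a b b := (mswap12 hF a b a b).trans c1
  have c3 : mform4 F a b a a = mform4 F a a a b :=
    (mswap23 hF a a b a).trans (mswap34 hF a a a b)
  have c4 : mform4 F b a a a = mform4 F a a a b := (mswap12 hF a b a a).trans c3
  have c6 : mform4 F b a b b = mform4 F a b b b := mswap12 hF a b b b
  have c5 : mform4 F b b a b = mform4 F a b b b := (mswap23 hF b a b b).trans c6
  have c7 : mform4 F b b a a = mform4 F a a b b := by
    rw [mswap23 hF b a b a, mswap12 hF a b b a, mswap34 hF a b a b, c1]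
  have hp_ab : mform4 F (a + b) (a + b) a b =
      mform4 F a a a b + 2 * mform4 F a a b b + mform4 F a b b b := by
    rw [mexp2 a b a b, c1, c2, c5]; ring
  have hp_aa : mform4 F (a + b) (a + b) a a =
      mform4 F a a a a + 2 * mform4 F a a a b + mform4 F a a b b := by
    rw [mexp2 a b a a, c3, c4, c7]; ring
  have hp_bb : mform4 F (a + b) (a + b) b b =
      mform4 F a a b b + 2 * mform4 F a b b b + mform4 F b b b b := by
    rw [mexp2 a b b b, c6]; ring
  have hq_ab : mform4 F (a - b) (a - b) a b =
      mform4 F a a a b - 2 * mform4 F a a b b + mform4 F a b b b := by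
    rw [mexp2' a b a b, c1, c2, c5]; ring
  have hq_aa : mform4 F (a - b) (a - b) a a =
      mform4 F a a a a - 2 * mform4 F a a a b + mform4 F a a b b := by
    rw [mexp2' a b a a, c3, c4, c7]; ring
  have hq_bb : mform4 F (a - b) (a - b) b b =
      mform4 F a a b b - 2 * mform4 F a b b b + mform4 F b b b b := by
    rw [mexp2' a b b b, c6]; ring
  have i1 := cs hF hconv (a + b) a b
  have i2 := cs hF hconv (a - b) a b
  rw [hp_ab, hp_aa, hp_bb] at i1
  rw [hq_ab, hq_aa, hq_bb] at i2
  have hA0 : 0 ≤ mform4 F a a a a := hess_nonneg hF hconv a a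
  have hE0 : 0 ≤ mform4 F b b b b := hess_nonneg hF hconv b b
  have hC0 : 0 ≤ mform4 F a a b b := hess_nonneg hF hconv a b
  set A := mform4 F a a a a
  set B := mform4 F a a a b
  set C := mform4 F a a b b
  set D := mform4 F a b b b
  set E := mform4 F b b b b
  have h3 : 3 * C ^ 2 ≤ A * E + C * (A + E) := by nlinarith [i1, i2, sq_nonneg (B - D)]
  nlinarith [h3, hA0, hE0, hC0, sq_nonneg (A - E), mul_nonneg hA0 hE0,
    mul_nonneg hC0 hA0, mul_nonneg hC0 hE0]

end Stmt4Aux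

open Stmt4Aux in
/-- If the score function of a symmetric fourth-order tensor is convex, then
`F⁴(x,y,z,t) ≤ max { F⁴(u,u,u,u) : u ∈ {x,y,z,t} }`. -/
theorem stmt_4 {n : ℕ} (F : Fin n → Fin n → Fin n → Fin n → ℝ) (hF : Sym4 F)
    (hconv : ConvexOn ℝ Set.univ (fun x : Fin n → ℝ => mform4 F x x x x)) :
    ∀ x y z t : Fin n → ℝ,
      mform4 F x y z t ≤
        max (max (mform4 F x x x x) (mform4 F y y y y))
            (max (mform4 F z z z z) (mform4 F t t t t)) := by
  intro x y z t
  have hA := stageA hF hconv x y z t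
  have p1 := pairbound hF hconv x z
  have p2 := pairbound hF hconv y z
  have p3 := pairbound hF hconv x t
  have p4 := pairbound hF hconv y t
  have m1 : mform4 F x x x x ≤
      max (max (mform4 F x x x x) (mform4 F y y y y))
          (max (mform4 F z z z z) (mform4 F t t t t)) :=
    le_trans (le_max_left _ _) (le_max_left _ _)
  have m2 : mform4 F y y y y ≤
      max (max (mform4 F x x x x) (mform4 F y y y y))
          (max (mform4 F z z z z) (mform4 F t t t t)) :=
    le_trans (le_max_right _ _) (le_max_left _ _)
  have m3 : mform4 F z z z z ≤
      max (max (mform4 F x x x x) (mform4 F y y y y))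
          (max (mform4 F z z z z) (mform4 F t t t t)) :=
    le_trans (le_max_left _ _) (le_max_right _ _)
  have m4 : mform4 F t t t t ≤
      max (max (mform4 F x x x x) (mform4 F y y y y))
          (max (mform4 F z z z z) (mform4 F t t t t)) :=
    le_trans (le_max_right _ _) (le_max_right _ _)
  linarith
end

section
/- Let n₁ ≤ n₂ be positive integers and M the set of binary matrices X ∈ {0,1}^{n₁×n₂} with row sums equal to 1 and column sums at most 1, identified with vectors x ∈ {0,1}^{n₁n₂}. Let F³ be a symmetric third-order tensor on ℝ^{n₁n₂} with score S³, and let F⁴ be its lift F⁴_{ijkl} = F³_{ijk} + F³_{ijl} + F³_{ikl} + F³_{jkl}, with score S⁴. Then S⁴(x) = 4 n₁ S³(x) for every x ∈ M; consequently max_{x∈M} S⁴(x) = 4 n₁ · max_{x∈M} S³(x), and a point x ∈ M maximizes S⁴ over M if and only if it maximizes S³ over M. -/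
open Pointwise


/-- A third-order tensor is symmetric if its entries are invariant under any
permutation of the indices. -/
def Sym3 {ι : Type*} (F : ι → ι → ι → ℝ) : Prop :=
  ∀ (σ : Equiv.Perm (Fin 3)) (v : Fin 3 → ι),
    F (v (σ 0)) (v (σ 1)) (v (σ 2)) = F (v 0) (v 1) (v 2)

/-- The score function of a third-order tensor. -/
def score3 {ι : Type*} [Fintype ι] (F : ι → ι → ι → ℝ) (x : ι → ℝ) : ℝ :=
  ∑ i, ∑ j, ∑ k, F i j k * x i * x j * x k

/-- The score function of a fourth-order tensor. -/
def score4 {ι : Type*} [Fintype ι] (F : ι → ι → ι → ι → ℝ) (x : ι → ℝ) : ℝ :=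
  ∑ i, ∑ j, ∑ k, ∑ l, F i j k l * x i * x j * x k * x l

/-- The lift of a third-order tensor to a fourth-order tensor:
`F⁴_{ijkl} = F³_{ijk} + F³_{ijl} + F³_{ikl} + F³_{jkl}`. -/
def lift4 {ι : Type*} (F : ι → ι → ι → ℝ) : ι → ι → ι → ι → ℝ := fun i j k l =>
  F i j k + F i j l + F i k l + F j k l

/-- The set of one-to-one assignment matrices, viewed as 0/1 vectors indexed by
`Fin n₁ × Fin n₂`: each row sums to 1 and each column sums to at most 1. -/
def AssignSet (n₁ n₂ : ℕ) : Set (Fin n₁ × Fin n₂ → ℝ) :=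
  {x | (∀ p, x p = 0 ∨ x p = 1) ∧ (∀ i, ∑ j, x (i, j) = 1) ∧ (∀ j, ∑ i, x (i, j) ≤ 1)}

private lemma key_lift_aux {ι : Type*} [Fintype ι] (F : ι → ι → ι → ℝ) (x : ι → ℝ) :
    score4 (lift4 F) x = 4 * (∑ p, x p) * score3 F x := by
  have hterm : ∀ (i j k l : ι), lift4 F i j k l * x i * x j * x k * x l =
      (F i j k * x i * x j * x k) * x l + x k * (F i j l * x i * x j * x l)
      + x j * (F i k l * x i * x k * x l) + x i * (F j k l * x j * x k * x l) := by
    intros; simp only [lift4]; ring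
  simp only [score4, hterm, Finset.sum_add_distrib, ← Finset.mul_sum, ← Finset.sum_mul,
    score3]
  ring_nf

private lemma key_sum_aux {n₁ n₂ : ℕ} {x : Fin n₁ × Fin n₂ → ℝ} (hx : x ∈ AssignSet n₁ n₂) :
    ∑ p, x p = n₁ := by
  rw [Fintype.sum_prod_type]
  simp [hx.2.1]

/-- On the set of assignment vectors, `S⁴(x) = 4 n₁ S³(x)`; consequently the maxima
agree up to the factor `4 n₁` and the maximizers of `S⁴` and `S³` over `M` coincide. -/
theorem stmt_15 {n₁ n₂ : ℕ} (h₁ : 0 < n₁) (h₂ : n₁ ≤ n₂)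
    (F : Fin n₁ × Fin n₂ → Fin n₁ × Fin n₂ → Fin n₁ × Fin n₂ → ℝ) (hF : Sym3 F) :
    (∀ x ∈ AssignSet n₁ n₂, score4 (lift4 F) x = 4 * n₁ * score3 F x) ∧
      sSup (score4 (lift4 F) '' AssignSet n₁ n₂) =
        4 * n₁ * sSup (score3 F '' AssignSet n₁ n₂) ∧
      ∀ x ∈ AssignSet n₁ n₂,
        (IsMaxOn (score4 (lift4 F)) (AssignSet n₁ n₂) x ↔
          IsMaxOn (score3 F) (AssignSet n₁ n₂) x) := by
  have heq : ∀ x ∈ AssignSet n₁ n₂, score4 (lift4 F) x = 4 * n₁ * score3 F x := by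
    intro x hx
    rw [key_lift_aux, key_sum_aux hx]
  have hcpos : (0 : ℝ) < 4 * n₁ := by positivity
  refine ⟨heq, ?_, ?_⟩
  · have himg : score4 (lift4 F) '' AssignSet n₁ n₂ =
        (4 * (n₁ : ℝ)) • (score3 F '' AssignSet n₁ n₂) := by
      rw [← Set.image_smul, Set.image_image]
      exact Set.image_congr fun x hx => by rw [heq x hx]; rfl
    rw [himg, Real.sSup_smul_of_nonneg hcpos.le, smul_eq_mul]
  · intro x hx
    constructor
    · intro h y hy
      have := h hy
      simp only [Set.mem_setOf_eq] at this ⊢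
      rw [heq y hy, heq x hx] at this
      exact le_of_mul_le_mul_left this hcpos
    · intro h y hy
      have := h hy
      simp only [Set.mem_setOf_eq] at this ⊢
      rw [heq y hy, heq x hx]
      exact mul_le_mul_of_nonneg_left this hcpos.le
end
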